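/- Every homogeneous subgroup of the Heisenberg group H^n is either horizontal (contained in H_1) or vertical (contains H_2). -/

import Mathlib

noncomputable section

open Filter Set
open scoped BigOperators Topology ENNReal

/-- The Heisenberg group product on `ℝ^{2n+1}` in symplectic coordinates. -/
def hmul (n : ℕ) (x y : Fin (2*n+1) → ℝ) : Fin (2*n+1) → ℝ := fun j =>
  x j + y j + (if (j : ℕ) = 2*n then
    (∑ i : Fin n, (x ⟨(i:ℕ), by omega⟩ * y ⟨(i:ℕ)+n, by omega⟩
      - x ⟨(i:ℕ)+n, by omega⟩ * y ⟨(i:ℕ), by omega⟩)) / 2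
  else 0)

/-- Intrinsic dilations of the Heisenberg group. -/
def hdil (n : ℕ) (t : ℝ) (x : Fin (2*n+1) → ℝ) : Fin (2*n+1) → ℝ := fun j =>
  if (j : ℕ) = 2*n then t^2 * x j else t * x j

/-- The horizontal layer `H_1`. -/
def H1set (n : ℕ) : Set (Fin (2*n+1) → ℝ) := {x | x ⟨2*n, by omega⟩ = 0}

/-- The vertical layer (center) `H_2`. -/
def H2set (n : ℕ) : Set (Fin (2*n+1) → ℝ) := {x | ∀ j : Fin (2*n+1), (j:ℕ) ≠ 2*n → x j = 0}

/-- A homogeneous distance on the Heisenberg group: a distance inducing the standard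
topology, left invariant and 1-homogeneous under dilations. -/
structure IsHomDist (n : ℕ) (d : (Fin (2*n+1) → ℝ) → (Fin (2*n+1) → ℝ) → ℝ) : Prop where
  eq_zero_iff : ∀ x y, d x y = 0 ↔ x = y
  symm : ∀ x y, d x y = d y x
  triangle : ∀ x y z, d x z ≤ d x y + d y z
  continuous : Continuous fun p : (Fin (2*n+1) → ℝ) × (Fin (2*n+1) → ℝ) => d p.1 p.2
  ball_mem_nhds : ∀ x : Fin (2*n+1) → ℝ, ∀ ε > (0:ℝ), {y | d x y < ε} ∈ nhds x
  leftInvariant : ∀ z x y, d (hmul n z x) (hmul n z y) = d x y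
  homogeneous : ∀ t > (0:ℝ), ∀ x y, d (hdil n t x) (hdil n t y) = t * d x y

/-- A homogeneous subgroup: a closed subgroup invariant under all dilations. -/
structure IsHomSubgroup (n : ℕ) (S : Set (Fin (2*n+1) → ℝ)) : Prop where
  zero_mem : (0 : Fin (2*n+1) → ℝ) ∈ S
  mul_mem : ∀ x ∈ S, ∀ y ∈ S, hmul n x y ∈ S
  neg_mem : ∀ x ∈ S, -x ∈ S
  dil_mem : ∀ t > (0:ℝ), ∀ x ∈ S, hdil n t x ∈ S
  closed : IsClosed S

/-- A vertical subgroup contains the center `H_2`. -/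
def IsVertical (n : ℕ) (S : Set (Fin (2*n+1) → ℝ)) : Prop := IsHomSubgroup n S ∧ H2set n ⊆ S

/-- A horizontal subgroup is contained in `H_1`. -/
def IsHorizontal (n : ℕ) (S : Set (Fin (2*n+1) → ℝ)) : Prop := IsHomSubgroup n S ∧ S ⊆ H1set n

/-- `H^n = W ⋊ V`. -/
def IsSemidirect (n : ℕ) (W V : Set (Fin (2*n+1) → ℝ)) : Prop :=
  (∀ x, ∃ w ∈ W, ∃ v ∈ V, x = hmul n w v) ∧ W ∩ V = {0}

/-- Every homogeneous subgroup of the Heisenberg group `H^n` is either horizontal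
(contained in `H_1`) or vertical (contains `H_2`). -/
lemma key (n : ℕ) (S : Set (Fin (2*n+1) → ℝ)) (hS : IsHomSubgroup n S)
    (x : Fin (2*n+1) → ℝ) (hx : x ∈ S) (t : ℝ) (ht0 : 0 < t) (ht1 : t < 1) :
    (fun j : Fin (2*n+1) => if (j:ℕ) = 2*n then 2*t*(x ⟨2*n, by omega⟩)/(1-t) else 0) ∈ S := by
  have h1t : (0:ℝ) < 1 - t := by linarith
  have hy6 : hmul n (hdil n (1/(1-t)) (hmul n x (-(hdil n t x)))) (-x) ∈ S :=
    hS.mul_mem _ (hS.dil_mem _ (by positivity) _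
      (hS.mul_mem x hx _ (hS.neg_mem _ (hS.dil_mem t ht0 x hx)))) _ (hS.neg_mem x hx)
  have hni : ∀ i : Fin n, ((i:ℕ) ≠ 2*n) ∧ ((i:ℕ)+n ≠ 2*n) := fun i => by
    have := i.isLt; omega
  have key : (fun j : Fin (2*n+1) => if (j:ℕ) = 2*n then 2*t*(x ⟨2*n, by omega⟩)/(1-t) else 0)
      = hmul n (hdil n (1/(1-t)) (hmul n x (-(hdil n t x)))) (-x) := by
    funext j
    simp only [hmul, hdil, Pi.neg_apply]
    have hne1 : ∀ i : Fin n, ¬((i:ℕ) = 2*n) := fun i => (hni i).1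
    have hne2 : ∀ i : Fin n, ¬((i:ℕ)+n = 2*n) := fun i => (hni i).2
    by_cases hj : (j:ℕ) = 2*n
    · simp only [hj, if_true, hne1, hne2, if_false]
      have e1 : ∀ (a b : ℝ), a * -(t*b) - b * -(t*a) = 0 := fun a b => by ring
      have e2 : ∀ (c a b : ℝ), c * (a + -(t*a) + 0) * -b - c * (b + -(t*b) + 0) * -a = 0 :=
        fun c a b => by ring
      simp only [e1, e2, Finset.sum_const_zero]
      have hjj : x j = x ⟨2*n, by omega⟩ := by congr 1; exact Fin.ext hj
      rw [hjj]
      field_simp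
      ring
    · simp only [hj, if_false]
      field_simp
      ring
  rw [key]; exact hy6

theorem stmt_6 (n : ℕ) (S : Set (Fin (2*n+1) → ℝ)) (hS : IsHomSubgroup n S) :
    S ⊆ H1set n ∨ H2set n ⊆ S := by
  by_cases h : S ⊆ H1set n
  · exact Or.inl h
  right
  obtain ⟨x, hxS, hxH⟩ := Set.not_subset.mp h
  have ha : x ⟨2*n, by omega⟩ ≠ 0 := hxH
  set a := x ⟨2*n, by omega⟩ with ha_def
  have hvS : ∀ c : ℝ, 0 < c * a →
      (fun j : Fin (2*n+1) => if (j:ℕ) = 2*n then c else 0) ∈ S := by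
    intro c hc
    have hr : 0 < c / a := by
      have : c / a = (c * a) / (a ^ 2) := by field_simp
      rw [this]; positivity
    set r := c / a with hr_def
    have ht0 : 0 < r / (r + 2) := by positivity
    have ht1 : r / (r + 2) < 1 := by
      rw [div_lt_one (by linarith)]; linarith
    have hk := key n S hS x hxS (r / (r + 2)) ht0 ht1
    have heq : (fun j : Fin (2*n+1) => if (j:ℕ) = 2*n then c else 0)
        = (fun j : Fin (2*n+1) =>
            if (j:ℕ) = 2*n then 2*(r/(r+2))*(x ⟨2*n, by omega⟩)/(1-(r/(r+2))) else 0) := by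
      funext j
      by_cases hj : (j:ℕ) = 2*n
      · rw [if_pos hj, if_pos hj]
        have hr2 : (0:ℝ) < r + 2 := by linarith
        have h1t : 1 - r / (r + 2) = 2 / (r + 2) := by field_simp; ring
        rw [h1t, ← ha_def, show c = r * a by rw [hr_def, div_mul_cancel₀ c ha]]
        rw [div_div_eq_mul_div]
        field_simp
      · rw [if_neg hj, if_neg hj]
    rw [heq]; exact hk
  intro y hy
  have hyv : y = fun j : Fin (2*n+1) =>
      if (j:ℕ) = 2*n then y ⟨2*n, by omega⟩ else 0 := by
    funext j
    by_cases hj : (j:ℕ) = 2*n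
    · rw [if_pos hj]; congr 1; exact Fin.ext hj
    · rw [if_neg hj]; exact hy j hj
  set c := y ⟨2*n, by omega⟩ with hc_def
  rcases lt_trichotomy (c * a) 0 with hca | hca | hca
  · have hpos : 0 < (-c) * a := by nlinarith
    have hm := hS.neg_mem _ (hvS (-c) hpos)
    have : -(fun j : Fin (2*n+1) => if (j:ℕ) = 2*n then -c else 0) = y := by
      rw [hyv]; funext j
      by_cases hj : (j:ℕ) = 2*n
      · simp [hj]
      · simp [hj]
    rwa [this] at hm
  · have hc0 : c = 0 := by
      rcases mul_eq_zero.mp hca with h' | h'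
      · exact h'
      · exact absurd h' ha
    have : y = 0 := by
      rw [hyv]; funext j
      by_cases hj : (j:ℕ) = 2*n
      · simp [hj, hc0]
      · simp [hj]
    rw [this]; exact hS.zero_mem
  · rw [hyv]; exact hvS c hca
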